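/- Let L be slowly varying at infinity and β > 0. Define g̃₁*(y) = (1/(2β)) log L(e^{2n-2}) whenever n-1 + (1/(2β))log L(e^{2n-2}) ≤ y < n + (1/(2β))log L(e^{2n}) for integer n ≥ 2. Then for every A > 0, g̃₁*(log(Ax)) - g̃₁*(log x) → 0 as x → ∞. -/

import Mathlib

open Filter

/-- For `L` slowly varying and `β > 0`, the step function
`g̃₁*(y) = (1/(2β)) log L(e^(2n-2))` on the `n`-th interval satisfies
`g̃₁*(log(Ax)) - g̃₁*(log x) → 0` as `x → ∞`, for every `A > 0`. -/
theorem stmt8 (L : ℝ → ℝ) (hLpos : ∀ x, 0 < L x)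
    (hL : ∀ a : ℝ, 0 < a → Tendsto (fun x => L (a * x) / L x) atTop (nhds 1))
    (β : ℝ) (hβ : 0 < β) (gstar : ℝ → ℝ)
    (hgstar : ∀ n : ℕ, 2 ≤ n → ∀ y : ℝ,
      (n : ℝ) - 1 + 1 / (2 * β) * Real.log (L (Real.exp (2 * (n : ℝ) - 2))) ≤ y →
      y < (n : ℝ) + 1 / (2 * β) * Real.log (L (Real.exp (2 * (n : ℝ)))) →
      gstar y = 1 / (2 * β) * Real.log (L (Real.exp (2 * (n : ℝ) - 2)))) :
    ∀ A : ℝ, 0 < A →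
      Tendsto (fun x => gstar (Real.log (A * x)) - gstar (Real.log x)) atTop (nhds 0) := by
  classical
  intro A hA
  set c : ℕ → ℝ := fun n => 1 / (2 * β) * Real.log (L (Real.exp (2 * (n : ℝ)))) with hc
  -- differences of c tend to 0
  have hexp : Tendsto (fun n : ℕ => Real.exp (2 * (n : ℝ))) atTop atTop := by
    apply Real.tendsto_exp_atTop.comp
    exact Tendsto.const_mul_atTop two_pos tendsto_natCast_atTop_atTop
  have hq : Tendsto (fun n : ℕ =>
      L (Real.exp 2 * Real.exp (2 * (n : ℝ))) / L (Real.exp (2 * (n : ℝ)))) atTop (nhds 1) :=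
    (hL (Real.exp 2) (Real.exp_pos 2)).comp hexp
  have hlogq : Tendsto (fun n : ℕ =>
      Real.log (L (Real.exp 2 * Real.exp (2 * (n : ℝ))) / L (Real.exp (2 * (n : ℝ)))))
      atTop (nhds 0) := by
    have := (Real.continuousAt_log one_ne_zero).tendsto.comp hq
    rw [Real.log_one] at this; exact this
  have hd : Tendsto (fun n : ℕ => c (n + 1) - c n) atTop (nhds 0) := by
    have heq : (fun n : ℕ => c (n + 1) - c n) = fun n : ℕ =>
        1 / (2 * β) * Real.log (L (Real.exp 2 * Real.exp (2 * (n : ℝ))) /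
          L (Real.exp (2 * (n : ℝ)))) := by
      funext n
      have h2 : Real.exp (2 * ((n + 1 : ℕ) : ℝ)) = Real.exp 2 * Real.exp (2 * (n : ℝ)) := by
        rw [← Real.exp_add]; push_cast; ring_nf
      simp only [hc]
      rw [h2, Real.log_div (hLpos _).ne' (hLpos _).ne']
      ring
    rw [heq]
    simpa using hlogq.const_mul (1 / (2 * β))
  rw [Metric.tendsto_atTop]
  intro ε hε
  set K : ℕ := ⌈2 * |Real.log A|⌉₊ + 1 with hK
  have hKA : 2 * |Real.log A| + 1 ≤ (K : ℝ) := by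
    rw [hK]; push_cast; linarith [Nat.le_ceil (2 * |Real.log A|)]
  set δ : ℝ := min (1 / 2) (ε / (K + 1)) with hδ
  have hδpos : 0 < δ := lt_min one_half_pos (div_pos hε (by positivity))
  have hδhalf : δ ≤ 1 / 2 := min_le_left _ _
  obtain ⟨n0', hn0'⟩ := (Metric.tendsto_atTop.mp hd) δ hδpos
  set n0 : ℕ := n0' + 1 with hn0def
  have hn0 : ∀ n, n0 ≤ n → |c (n + 1) - c n| < δ := by
    intro n hn
    have := hn0' n (by omega)
    simpa [Real.dist_eq] using this
  set e : ℕ → ℝ := fun n => (n : ℝ) + c n with he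
  have hmono : ∀ m n : ℕ, n0 ≤ n → (m : ℝ) / 2 ≤ e (n + m) - e n := by
    intro m
    induction m with
    | zero => intro n _; simp
    | succ k ih =>
      intro n hn
      have h1 := ih n hn
      have h2 : |c (n + k + 1) - c (n + k)| < δ := hn0 (n + k) (by omega)
      have h3 : e (n + (k + 1)) - e (n + k) = 1 + (c (n + k + 1) - c (n + k)) := by
        simp only [he]; push_cast; ring
      have h4 := abs_lt.mp h2
      push_cast
      push_cast at h1
      clear_value c e δ
      linarith [h4.1, h4.2]
  have hcdiff : ∀ m n : ℕ, n0 ≤ n → |c (n + m) - c n| ≤ (m : ℝ) * δ := by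
    intro m
    induction m with
    | zero => intro n _; simp
    | succ k ih =>
      intro n hn
      have h1 := ih n hn
      have h2 : |c (n + k + 1) - c (n + k)| < δ := hn0 (n + k) (by omega)
      have h3 : |c (n + (k + 1)) - c n| ≤ |c (n + k + 1) - c (n + k)| + |c (n + k) - c n| := by
        have := abs_sub_le (c (n + k + 1)) (c (n + k)) (c n)
        rw [← add_assoc]; exact this
      push_cast
      push_cast at h1
      linarith
  -- interval location
  have hval : ∀ y : ℝ, e n0 ≤ y →
      ∃ n : ℕ, n0 < n ∧ e (n - 1) ≤ y ∧ y < e n ∧ gstar y = c (n - 1) := by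
    intro y hy
    have hex : ∃ m : ℕ, n0 < m ∧ y < e m := by
      obtain ⟨m, hm⟩ := exists_nat_gt (2 * (y - e n0))
      refine ⟨n0 + (m + 1), by omega, ?_⟩
      have h1 : ((m + 1 : ℕ) : ℝ) / 2 ≤ e (n0 + (m + 1)) - e n0 := hmono (m + 1) n0 le_rfl
      push_cast at h1
      clear_value c e
      linarith
    set n : ℕ := Nat.find hex with hndef
    obtain ⟨hna, hnb⟩ := Nat.find_spec hex
    have hlb : e (n - 1) ≤ y := by
      rcases Nat.lt_or_ge (n0 + 1) n with h | h
      · have hmin : ¬(n0 < n - 1 ∧ y < e (n - 1)) := Nat.find_min hex (by omega)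
        rcases not_and_or.mp hmin with h1 | h1
        · exact absurd (by omega : n0 < n - 1) h1
        · exact not_lt.mp h1
      · have hn1 : n = n0 + 1 := by omega
        rw [hn1]
        simpa using hy
    have h2n : 2 ≤ n := by omega
    have hcast1 : ((n - 1 : ℕ) : ℝ) = (n : ℝ) - 1 := by
      rw [Nat.cast_sub (by omega : 1 ≤ n)]; simp
    have harg : Real.exp (2 * (n : ℝ) - 2) = Real.exp (2 * ((n - 1 : ℕ) : ℝ)) := by
      rw [hcast1]; ring_nf
    refine ⟨n, hna, hlb, hnb, ?_⟩
    have hg : gstar y = 1 / (2 * β) * Real.log (L (Real.exp (2 * (n : ℝ) - 2))) := by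
      apply hgstar n h2n y
      · rw [harg]
        have hEq : (n : ℝ) - 1 + 1 / (2 * β) * Real.log (L (Real.exp (2 * ((n - 1 : ℕ) : ℝ))))
            = e (n - 1) := by
          simp only [he, hc, hcast1]
        exact le_trans (le_of_eq hEq) hlb
      · have hEq : (n : ℝ) + 1 / (2 * β) * Real.log (L (Real.exp (2 * (n : ℝ)))) = e n := by
          simp only [he, hc]
        exact lt_of_lt_of_le hnb (le_of_eq hEq.symm)
    rw [hg, harg]
  -- main estimate
  refine ⟨Real.exp (max (e n0) (e n0 - Real.log A)), ?_⟩
  intro x hx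
  have hxpos : 0 < x := lt_of_lt_of_le (Real.exp_pos _) hx
  have hlx : max (e n0) (e n0 - Real.log A) ≤ Real.log x := by
    have := Real.log_le_log (Real.exp_pos _) hx
    rwa [Real.log_exp] at this
  have hy1 : e n0 ≤ Real.log x := le_trans (le_max_left _ _) hlx
  have hlogAx : Real.log (A * x) = Real.log A + Real.log x :=
    Real.log_mul hA.ne' hxpos.ne'
  have hy2 : e n0 ≤ Real.log (A * x) := by
    rw [hlogAx]
    have := le_trans (le_max_right _ _) hlx
    linarith
  obtain ⟨n1, hn1a, hn1b, hn1c, hn1d⟩ := hval (Real.log x) hy1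
  obtain ⟨n2, hn2a, hn2b, hn2c, hn2d⟩ := hval (Real.log (A * x)) hy2
  have hb1 : n2 ≤ n1 + K := by
    by_contra hcon
    push_neg at hcon
    have h1 : ((n2 - 1 - n1 : ℕ) : ℝ) / 2 ≤ e (n1 + (n2 - 1 - n1)) - e n1 :=
      hmono _ n1 (le_of_lt hn1a)
    rw [(by omega : n1 + (n2 - 1 - n1) = n2 - 1)] at h1
    have hK2 : (K : ℝ) ≤ ((n2 - 1 - n1 : ℕ) : ℝ) := by
      exact_mod_cast (by omega : K ≤ n2 - 1 - n1)
    have h2 : e (n2 - 1) - e n1 < Real.log A := by linarith [hn2b, hn1c, hlogAx]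
    have habs : Real.log A ≤ |Real.log A| := le_abs_self _
    clear_value c e K δ n0
    linarith
  have hb2 : n1 ≤ n2 + K := by
    by_contra hcon
    push_neg at hcon
    have h1 : ((n1 - 1 - n2 : ℕ) : ℝ) / 2 ≤ e (n2 + (n1 - 1 - n2)) - e n2 :=
      hmono _ n2 (le_of_lt hn2a)
    rw [(by omega : n2 + (n1 - 1 - n2) = n1 - 1)] at h1
    have hK2 : (K : ℝ) ≤ ((n1 - 1 - n2 : ℕ) : ℝ) := by
      exact_mod_cast (by omega : K ≤ n1 - 1 - n2)
    have h2 : e (n1 - 1) - e n2 < -Real.log A := by linarith [hn1b, hn2c, hlogAx]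
    have habs : -Real.log A ≤ |Real.log A| := neg_le_abs _
    clear_value c e K δ n0
    linarith
  have hKδ : (K : ℝ) * δ < ε := by
    have h1 : δ ≤ ε / (K + 1) := min_le_right _ _
    have h2 : (K : ℝ) * δ ≤ K * (ε / (K + 1)) := by
      apply mul_le_mul_of_nonneg_left h1 (by positivity)
    have h3 : (K : ℝ) * (ε / (K + 1)) < ε := by
      rw [mul_div_assoc', div_lt_iff₀ (by positivity)]
      nlinarith
    linarith
  have hfin : ∀ a b : ℕ, n0 ≤ a → a ≤ b → b ≤ a + K → |c b - c a| ≤ (K : ℝ) * δ := by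
    intro a b ha hab habK
    have h1 := hcdiff (b - a) a ha
    rw [(by omega : a + (b - a) = b)] at h1
    calc |c b - c a| ≤ ((b - a : ℕ) : ℝ) * δ := h1
      _ ≤ (K : ℝ) * δ := by
          apply mul_le_mul_of_nonneg_right _ hδpos.le
          exact_mod_cast (by omega : b - a ≤ K)
  rw [Real.dist_eq, sub_zero, hn1d, hn2d]
  rcases le_total n1 n2 with h | h
  · exact lt_of_le_of_lt (hfin (n1 - 1) (n2 - 1) (by omega) (by omega) (by omega)) hKδ
  · rw [abs_sub_comm]
    exact lt_of_le_of_lt (hfin (n2 - 1) (n1 - 1) (by omega) (by omega) (by omega)) hKδ
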